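/- Let H ∈ (1/4, 1/2), β₀ > 1/2 − H, and 1 ≤ p₀ ≤ p < ∞. Suppose u₀ ∈ L^{p₀}(ℝ) ∩ L^∞(ℝ), u₀ is Hölder continuous of order β₀ (i.e., there is K ≥ 0 with |u₀(x) − u₀(y)| ≤ K|x − y|^{β₀} for all x, y ∈ ℝ), and ∫_ℝ ‖u₀(·) − u₀(· + h)‖²_{L^{p₀}(ℝ)} |h|^{2H−2} dh < ∞. Then ∫_ℝ ‖u₀(·) − u₀(· + h)‖²_{L^{p}(ℝ)} |h|^{2H−2} dh < ∞. -/

import Mathlib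

open MeasureTheory Set
open scoped ENNReal

private lemma young_ennreal (a b : ℝ≥0∞) {θ : ℝ} (h0 : 0 ≤ θ) (h1 : θ ≤ 1) :
    a ^ θ * b ^ (1 - θ) ≤ a + b := by
  calc a ^ θ * b ^ (1 - θ)
      ≤ (a ⊔ b) ^ θ * (a ⊔ b) ^ (1 - θ) :=
        mul_le_mul' (ENNReal.rpow_le_rpow le_sup_left h0)
          (ENNReal.rpow_le_rpow le_sup_right (by linarith))
    _ = (a ⊔ b) ^ (θ + (1 - θ)) := (ENNReal.rpow_add_of_nonneg θ (1 - θ) h0 (by linarith)).symm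
    _ = a ⊔ b := by norm_num
    _ ≤ a + b := sup_le le_self_add le_add_self

private lemma interp_sq {α : Type*} [MeasurableSpace α] {μ : Measure α}
    (f : α → ℝ) {p₀ p : ℝ} (hp₀ : 1 ≤ p₀) (hp : p₀ ≤ p) :
    eLpNorm f (ENNReal.ofReal p) μ ^ 2
      ≤ eLpNorm f (ENNReal.ofReal p₀) μ ^ 2 + eLpNormEssSup f μ ^ 2 := by
  have hp0 : (0:ℝ) < p₀ := lt_of_lt_of_le one_pos hp₀
  have hpp : (0:ℝ) < p := hp0.trans_le hp
  set M := eLpNormEssSup f μ with hM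
  rcases eq_or_ne M ⊤ with hMt | hMt
  · rw [hMt]
    simp [ENNReal.top_pow]
  have h2 : ∀ x : ℝ≥0∞, x ^ 2 = x ^ (2:ℝ) := fun x => by
    rw [← ENNReal.rpow_natCast]; norm_num
  rw [h2, h2, h2]
  refine le_trans ?_ (young_ennreal (eLpNorm f (ENNReal.ofReal p₀) μ ^ (2:ℝ)) (M ^ (2:ℝ))
    (θ := p₀ / p) (by positivity) (by rw [div_le_one hpp]; exact hp))
  have key : (∫⁻ x, (‖f x‖₊ : ℝ≥0∞) ^ p ∂μ)
      ≤ (∫⁻ x, (‖f x‖₊ : ℝ≥0∞) ^ p₀ ∂μ) * M ^ (p - p₀) := by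
    rw [← lintegral_mul_const' (M ^ (p - p₀)) _
      (ENNReal.rpow_ne_top_of_nonneg (sub_nonneg.2 hp) hMt)]
    refine lintegral_mono_ae ?_
    filter_upwards [ae_le_eLpNormEssSup (f := f) (μ := μ)] with x hx
    calc (‖f x‖₊ : ℝ≥0∞) ^ p = (‖f x‖₊ : ℝ≥0∞) ^ p₀ * (‖f x‖₊ : ℝ≥0∞) ^ (p - p₀) := by
          rw [← ENNReal.rpow_add_of_nonneg _ _ hp0.le (sub_nonneg.2 hp)]
          congr 1; ring
      _ ≤ (‖f x‖₊ : ℝ≥0∞) ^ p₀ * M ^ (p - p₀) :=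
          mul_le_mul_right (ENNReal.rpow_le_rpow hx (sub_nonneg.2 hp)) _
  rw [eLpNorm_eq_lintegral_rpow_enorm_toReal (by simpa [ENNReal.ofReal_eq_zero] using hpp)
      ENNReal.ofReal_ne_top,
    eLpNorm_eq_lintegral_rpow_enorm_toReal (by simpa [ENNReal.ofReal_eq_zero] using hp0)
      ENNReal.ofReal_ne_top,
    ENNReal.toReal_ofReal hpp.le, ENNReal.toReal_ofReal hp0.le]
  rw [← ENNReal.rpow_mul, ← ENNReal.rpow_mul, ← ENNReal.rpow_mul, ← ENNReal.rpow_mul]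
  calc (∫⁻ x, (‖f x‖₊ : ℝ≥0∞) ^ p ∂μ) ^ (1 / p * 2)
      ≤ ((∫⁻ x, (‖f x‖₊ : ℝ≥0∞) ^ p₀ ∂μ) * M ^ (p - p₀)) ^ (1 / p * 2) :=
        ENNReal.rpow_le_rpow key (by positivity)
    _ = (∫⁻ x, (‖f x‖₊ : ℝ≥0∞) ^ p₀ ∂μ) ^ (1 / p * 2) * (M ^ (p - p₀)) ^ (1 / p * 2) :=
        ENNReal.mul_rpow_of_nonneg _ _ (by positivity)
    _ = (∫⁻ x, (‖f x‖₊ : ℝ≥0∞) ^ p₀ ∂μ) ^ (1 / p₀ * (2 * (p₀ / p))) * M ^ (2 * (1 - p₀ / p)) := by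
        rw [← ENNReal.rpow_mul,
          show (p - p₀) * (1 / p * 2) = 2 * (1 - p₀ / p) by field_simp,
          show 1 / p * 2 = 1 / p₀ * (2 * (p₀ / p)) by field_simp]

theorem stmt13 (H β₀ p₀ p : ℝ) (hH1 : 1 / 4 < H) (hH2 : H < 1 / 2)
    (hβ : 1 / 2 - H < β₀) (hp₀ : 1 ≤ p₀) (hp : p₀ ≤ p)
    (u₀ : ℝ → ℝ)
    (hLp₀ : MemLp u₀ (ENNReal.ofReal p₀) volume)
    (hLinf : MemLp u₀ ⊤ volume)
    (K : ℝ) (hK : 0 ≤ K)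
    (hHolder : ∀ x y : ℝ, |u₀ x - u₀ y| ≤ K * |x - y| ^ β₀)
    (hfin : (∫⁻ h : ℝ,
        (eLpNorm (fun x => u₀ x - u₀ (x + h)) (ENNReal.ofReal p₀) volume) ^ 2 *
          ENNReal.ofReal (|h| ^ (2 * H - 2))) < ⊤) :
    (∫⁻ h : ℝ,
        (eLpNorm (fun x => u₀ x - u₀ (x + h)) (ENNReal.ofReal p) volume) ^ 2 *
          ENNReal.ofReal (|h| ^ (2 * H - 2))) < ⊤ := by
  have hmeasu : AEStronglyMeasurable u₀ volume := hLp₀.1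
  have htrans : ∀ h : ℝ, AEStronglyMeasurable (fun x => u₀ (x + h)) volume := fun h =>
    hmeasu.comp_quasiMeasurePreserving
      (measurePreserving_add_right volume h).quasiMeasurePreserving
  set E := eLpNormEssSup u₀ volume with hEdef
  have hE : E ≠ ⊤ := by
    rw [hEdef, ← eLpNorm_exponent_top]
    exact hLinf.2.ne
  set c : ℝ := 2 * E.toReal with hcdef
  have hcnn : (0:ℝ) ≤ c := by positivity
  set g : ℝ → ℝ := fun h => (min (K * |h| ^ β₀) c) ^ 2 * |h| ^ (2 * H - 2) with hgdef
  have hgnn : ∀ h, 0 ≤ g h := fun h =>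
    mul_nonneg (sq_nonneg _) (Real.rpow_nonneg (abs_nonneg _) _)
  have habs : Measurable fun h : ℝ => |h| := continuous_abs.measurable
  have hβ0 : (0:ℝ) < β₀ := by linarith
  have hrpow1 : Measurable fun h : ℝ => |h| ^ β₀ :=
    ((Real.continuous_rpow_const hβ0.le).comp continuous_abs).measurable
  have hrpow2 : Measurable fun h : ℝ => |h| ^ (2 * H - 2) := by
    have heq : (fun h : ℝ => |h| ^ (2 * H - 2)) = fun h =>
        if h = 0 then 0 else Real.exp (Real.log |h| * (2 * H - 2)) := by
      funext h
      by_cases h0 : h = 0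
      · simp [h0, Real.zero_rpow (by linarith : 2 * H - 2 ≠ 0)]
      · rw [if_neg h0, Real.rpow_def_of_pos (abs_pos.2 h0)]
    rw [heq]
    exact Measurable.ite (measurableSet_eq) measurable_const
      (Real.measurable_exp.comp ((Real.measurable_log.comp habs).mul_const _))
  have hgm : Measurable g :=
    (((hrpow1.const_mul K).min measurable_const).pow_const 2).mul hrpow2
  -- essential sup bound
  have hMb : ∀ h : ℝ, eLpNormEssSup (fun x => u₀ x - u₀ (x + h)) volume ≤
      ENNReal.ofReal (min (K * |h| ^ β₀) c) := by
    intro h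
    rcases le_total (K * |h| ^ β₀) c with hc | hc
    · rw [min_eq_left hc]
      refine eLpNormEssSup_le_of_ae_bound (C := K * |h| ^ β₀)
        (Filter.Eventually.of_forall fun x => ?_)
      have h1 := hHolder x (x + h)
      have h2 : x - (x + h) = -h := by ring
      rw [h2, abs_neg] at h1
      simpa [Real.norm_eq_abs] using h1
    · rw [min_eq_right hc]
      have htr : eLpNorm (fun x => u₀ (x + h)) ⊤ volume = eLpNorm u₀ ⊤ volume :=
        eLpNorm_comp_measurePreserving hmeasu (measurePreserving_add_right volume h)
      have h1 : eLpNorm (fun x => u₀ x - u₀ (x + h)) ⊤ volume ≤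
          eLpNorm u₀ ⊤ volume + eLpNorm (fun x => u₀ (x + h)) ⊤ volume :=
        eLpNorm_sub_le hmeasu (htrans h) le_top
      have hE2 : eLpNorm u₀ ⊤ volume = E := by
        rw [eLpNorm_exponent_top, hEdef]
      rw [htr, hE2, ← two_mul] at h1
      have h1' : eLpNormEssSup (fun x => u₀ x - u₀ (x + h)) volume ≤ 2 * E := by
        rw [← eLpNorm_exponent_top]; exact h1
      refine h1'.trans ?_
      rw [hcdef, ENNReal.ofReal_mul (by norm_num), ENNReal.ofReal_ofNat,
        ENNReal.ofReal_toReal hE]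
  -- pointwise bound
  have hpt : ∀ h : ℝ,
      eLpNorm (fun x => u₀ x - u₀ (x + h)) (ENNReal.ofReal p) volume ^ 2 *
          ENNReal.ofReal (|h| ^ (2 * H - 2)) ≤
        eLpNorm (fun x => u₀ x - u₀ (x + h)) (ENNReal.ofReal p₀) volume ^ 2 *
          ENNReal.ofReal (|h| ^ (2 * H - 2)) + ENNReal.ofReal (g h) := by
    intro h
    have h1 := interp_sq (μ := volume) (fun x => u₀ x - u₀ (x + h)) hp₀ hp
    have h2 : eLpNormEssSup (fun x => u₀ x - u₀ (x + h)) volume ^ 2 *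
        ENNReal.ofReal (|h| ^ (2 * H - 2)) ≤ ENNReal.ofReal (g h) := by
      have h3 : eLpNormEssSup (fun x => u₀ x - u₀ (x + h)) volume ^ 2 ≤
          ENNReal.ofReal (min (K * |h| ^ β₀) c) ^ 2 := by gcongr; exact hMb h
      calc eLpNormEssSup (fun x => u₀ x - u₀ (x + h)) volume ^ 2 *
            ENNReal.ofReal (|h| ^ (2 * H - 2))
          ≤ ENNReal.ofReal (min (K * |h| ^ β₀) c) ^ 2 *
            ENNReal.ofReal (|h| ^ (2 * H - 2)) := mul_le_mul_left h3 _
        _ = ENNReal.ofReal (g h) := by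
            rw [← ENNReal.ofReal_pow (le_min (by positivity) hcnn),
              ← ENNReal.ofReal_mul (by positivity)]
    calc eLpNorm (fun x => u₀ x - u₀ (x + h)) (ENNReal.ofReal p) volume ^ 2 *
          ENNReal.ofReal (|h| ^ (2 * H - 2))
        ≤ (eLpNorm (fun x => u₀ x - u₀ (x + h)) (ENNReal.ofReal p₀) volume ^ 2 +
            eLpNormEssSup (fun x => u₀ x - u₀ (x + h)) volume ^ 2) *
          ENNReal.ofReal (|h| ^ (2 * H - 2)) := mul_le_mul_left h1 _
      _ = eLpNorm (fun x => u₀ x - u₀ (x + h)) (ENNReal.ofReal p₀) volume ^ 2 *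
            ENNReal.ofReal (|h| ^ (2 * H - 2)) +
          eLpNormEssSup (fun x => u₀ x - u₀ (x + h)) volume ^ 2 *
            ENNReal.ofReal (|h| ^ (2 * H - 2)) := add_mul _ _ _
      _ ≤ _ := add_le_add_right h2 _
  -- integrability of g
  have hIoi : IntegrableOn g (Ioi (0:ℝ)) := by
    rw [← Ioc_union_Ioi_eq_Ioi (zero_le_one (α := ℝ))]
    refine IntegrableOn.union ?_ ?_
    · have hmaj : IntegrableOn (fun x : ℝ => K ^ 2 * x ^ (2 * β₀ + (2 * H - 2)))
          (Ioc (0:ℝ) 1) :=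
        ((intervalIntegrable_iff_integrableOn_Ioc_of_le (zero_le_one (α := ℝ))).1
          (intervalIntegral.intervalIntegrable_rpow' (by linarith))).const_mul _
      refine Integrable.mono' hmaj hgm.aestronglyMeasurable ?_
      rw [ae_restrict_iff' measurableSet_Ioc]
      refine Filter.Eventually.of_forall fun x hx => ?_
      have hx0 : (0:ℝ) < x := hx.1
      have habx : |x| = x := abs_of_pos hx0
      rw [Real.norm_eq_abs, abs_of_nonneg (hgnn x), hgdef]
      simp only [habx]
      have hmin : (min (K * x ^ β₀) c) ^ 2 ≤ (K * x ^ β₀) ^ 2 := by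
        have := min_le_left (K * x ^ β₀) c
        have h0 : 0 ≤ min (K * x ^ β₀) c := le_min (by positivity) hcnn
        nlinarith
      calc (min (K * x ^ β₀) c) ^ 2 * x ^ (2 * H - 2)
          ≤ (K * x ^ β₀) ^ 2 * x ^ (2 * H - 2) :=
            mul_le_mul_of_nonneg_right hmin (Real.rpow_nonneg hx0.le _)
        _ = K ^ 2 * x ^ (2 * β₀ + (2 * H - 2)) := by
            rw [mul_pow, ← Real.rpow_natCast (x ^ β₀) 2, ← Real.rpow_mul hx0.le,
              Real.rpow_add hx0]
            push_cast
            ring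
    · have hmaj : IntegrableOn (fun x : ℝ => c ^ 2 * x ^ (2 * H - 2)) (Ioi (1:ℝ)) :=
        (integrableOn_Ioi_rpow_of_lt (by linarith) one_pos).const_mul _
      refine Integrable.mono' hmaj hgm.aestronglyMeasurable ?_
      rw [ae_restrict_iff' measurableSet_Ioi]
      refine Filter.Eventually.of_forall fun x hx => ?_
      have hx0 : (0:ℝ) < x := lt_trans one_pos hx
      have habx : |x| = x := abs_of_pos hx0
      rw [Real.norm_eq_abs, abs_of_nonneg (hgnn x), hgdef]
      simp only [habx]
      refine mul_le_mul_of_nonneg_right ?_ (Real.rpow_nonneg hx0.le _)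
      have h0 : 0 ≤ min (K * x ^ β₀) c := le_min (by positivity) hcnn
      have := min_le_right (K * x ^ β₀) c
      nlinarith
  have hIio : IntegrableOn g (Iio (0:ℝ)) := by
    have hne : MeasurableEmbedding (Neg.neg : ℝ → ℝ) :=
      (Homeomorph.neg ℝ).measurableEmbedding
    have hmap : volume.restrict (Iio (0:ℝ)) =
        Measure.map Neg.neg (volume.restrict (Ioi (0:ℝ))) := by
      rw [show Ioi (0:ℝ) = Neg.neg ⁻¹' (Iio 0) from by ext x; simp,
        ← Measure.restrict_map measurable_neg measurableSet_Iio,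
        Measure.map_neg_eq_self]
    rw [IntegrableOn, hmap, hne.integrable_map_iff]
    have : (g ∘ Neg.neg) = g := by
      funext x
      simp only [Function.comp_apply, hgdef, abs_neg]
    rwa [this]
  have h0 : IntegrableOn g ({0} : Set ℝ) := by
    rw [IntegrableOn, Measure.restrict_eq_zero.2 (measure_singleton 0)]
    exact integrable_zero_measure
  have hgint : Integrable g volume := by
    rw [← integrableOn_univ,
      show (univ : Set ℝ) = Iio 0 ∪ ({0} ∪ Ioi 0) from by
        ext x; simpa using lt_trichotomy x 0]
    exact hIio.union (h0.union hIoi)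
  calc (∫⁻ h : ℝ,
        (eLpNorm (fun x => u₀ x - u₀ (x + h)) (ENNReal.ofReal p) volume) ^ 2 *
          ENNReal.ofReal (|h| ^ (2 * H - 2)))
      ≤ ∫⁻ h : ℝ,
        ((eLpNorm (fun x => u₀ x - u₀ (x + h)) (ENNReal.ofReal p₀) volume) ^ 2 *
          ENNReal.ofReal (|h| ^ (2 * H - 2)) + ENNReal.ofReal (g h)) :=
        lintegral_mono hpt
    _ = (∫⁻ h : ℝ,
        (eLpNorm (fun x => u₀ x - u₀ (x + h)) (ENNReal.ofReal p₀) volume) ^ 2 *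
          ENNReal.ofReal (|h| ^ (2 * H - 2))) + ∫⁻ h : ℝ, ENNReal.ofReal (g h) :=
        lintegral_add_right _ (ENNReal.measurable_ofReal.comp hgm)
    _ < ⊤ := ENNReal.add_lt_top.2 ⟨hfin, hgint.lintegral_lt_top⟩
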